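/- Suppose n is not prime and let p be the smallest prime divisor of n. Then there exists a subgroup H ≅ C_p × C_p of S_n such that Ш¹(H, A_{n-1}) ≅ Z/pZ, where A_{n-1} is the root lattice. -/

import Mathlib

open Function

section Core
variable (G : Type) [Group G]

/-- A map is `G`-equivariant. -/
def IsEquivMapP {M N : Type} [AddCommGroup M] [AddCommGroup N]
    [DistribMulAction G M] [DistribMulAction G N] (f : M → N) : Prop :=
  ∀ (g : G) (m : M), f (g • m) = g • f m

/-- `M` is a permutation `G`-lattice: it has a finite `ℤ`-basis permuted by `G`. -/
def IsPermLat (M : Type) [AddCommGroup M] [DistribMulAction G M] : Prop :=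
  ∃ (ι : Type) (_ : Fintype ι) (b : Module.Basis ι ℤ M) (σ : G → ι → ι),
    ∀ (g : G) (i : ι), g • (b i : M) = b (σ g i)

/-- `M` is a lattice: finitely generated and free over `ℤ`. -/
def IsLat (M : Type) [AddCommGroup M] : Prop := Module.Free ℤ M ∧ Module.Finite ℤ M

/-- A short exact sequence `0 → M → E → P → 0` of `G`-modules. -/
def ShortExactG (M E P : Type) [AddCommGroup M] [AddCommGroup E] [AddCommGroup P]
    [DistribMulAction G M] [DistribMulAction G E] [DistribMulAction G P] : Prop :=
  ∃ (i : M →+ E) (p : E →+ P), IsEquivMapP G i ∧ IsEquivMapP G p ∧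
    Injective i ∧ Surjective p ∧ i.range = p.ker

/-- Colliot-Thélène–Sansuc equivalence of `G`-lattices. -/
def LatEquiv (M N : Type) [AddCommGroup M] [AddCommGroup N]
    [DistribMulAction G M] [DistribMulAction G N] : Prop :=
  ∃ (E : Type) (_ : AddCommGroup E) (_ : DistribMulAction G E)
    (P : Type) (_ : AddCommGroup P) (_ : DistribMulAction G P)
    (Q : Type) (_ : AddCommGroup Q) (_ : DistribMulAction G Q),
    IsLat E ∧ IsPermLat G P ∧ IsPermLat G Q ∧
    ShortExactG G M E P ∧ ShortExactG G N E Q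

/-- `M` is stably permutation. -/
def IsStablyPerm (M : Type) [AddCommGroup M] [DistribMulAction G M] : Prop :=
  ∃ (P : Type) (_ : AddCommGroup P) (_ : DistribMulAction G P)
    (Q : Type) (_ : AddCommGroup Q) (_ : DistribMulAction G Q),
    IsPermLat G P ∧ IsPermLat G Q ∧
    ∃ e : (M × P) ≃+ Q, IsEquivMapP G e

/-- `M` is permutation projective: a direct summand of a permutation lattice. -/
def IsPermProj (M : Type) [AddCommGroup M] [DistribMulAction G M] : Prop :=
  ∃ (P : Type) (_ : AddCommGroup P) (_ : DistribMulAction G P), IsPermLat G P ∧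
    ∃ (i : M →+ P) (r : P →+ M), IsEquivMapP G i ∧ IsEquivMapP G r ∧ ∀ m, r (i m) = m

/-- `M` is quasi-permutation: it embeds into a permutation lattice with permutation quotient. -/
def IsQuasiPerm (M : Type) [AddCommGroup M] [DistribMulAction G M] : Prop :=
  ∃ (P : Type) (_ : AddCommGroup P) (_ : DistribMulAction G P)
    (Q : Type) (_ : AddCommGroup Q) (_ : DistribMulAction G Q),
    IsPermLat G P ∧ IsPermLat G Q ∧ ShortExactG G M P Q

variable (M : Type) [AddCommGroup M] [DistribMulAction G M]

/-- 1-cocycles. -/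
def Z1 : AddSubgroup (G → M) where
  carrier := {f | ∀ g h : G, f (g * h) = g • f h + f g}
  zero_mem' := by intro g h; simp
  add_mem' := by
    intro f f' hf hf' g h
    simp only [Pi.add_apply, hf g h, hf' g h, smul_add]; abel
  neg_mem' := by
    intro f hf g h
    simp only [Pi.neg_apply, hf g h, smul_neg]; abel

/-- The coboundary homomorphism. -/
def coboundHom : M →+ Z1 G M where
  toFun m := ⟨fun g => g • m - m, by intro g h; simp only [mul_smul, smul_sub]; abel⟩
  map_zero' := by apply Subtype.ext; funext g; simp
  map_add' := by
    intro a b; apply Subtype.ext; funext g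
    show g • (a + b) - (a + b) = (g • a - a) + (g • b - b)
    simp only [smul_add]; abel

/-- 1-coboundaries. -/
def B1 : AddSubgroup (Z1 G M) := (coboundHom G M).range

/-- First group cohomology `H¹(G, M)`. -/
abbrev H1 := Z1 G M ⧸ B1 G M

/-- Restriction of cocycles to a subgroup. -/
def resZ1 (H : Subgroup G) : Z1 G M →+ Z1 H M where
  toFun f := ⟨fun h => f.1 h, by
    intro a b
    have := f.2 (a : G) (b : G)
    exact this⟩
  map_zero' := rfl
  map_add' := fun _ _ => rfl

/-- Restriction on `H¹`. -/
def resH1 (H : Subgroup G) : H1 G M →+ H1 H M :=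
  QuotientAddGroup.map _ _ (resZ1 G M H) (by
    rintro _ ⟨m, rfl⟩
    exact ⟨m, Subtype.ext rfl⟩)

/-- `Ш¹(G, M)`. -/
def Sha1 : AddSubgroup (H1 G M) :=
  ⨅ g : G, (resH1 G M (Subgroup.zpowers g)).ker

/-- `M` is coflasque: `H¹(H, M) = 0` for all subgroups `H ≤ G`. -/
def IsCoflasque : Prop := ∀ H : Subgroup G, ∀ x y : H1 H M, x = y

end Core

section Core2
variable (G : Type) [Group G] (M : Type) [AddCommGroup M] [DistribMulAction G M]

/-- 2-cocycles. -/
def Z2 : AddSubgroup (G → G → M) where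
  carrier := {f | ∀ g h k : G, g • f h k - f (g * h) k + f g (h * k) - f g h = 0}
  zero_mem' := by intro g h k; simp
  add_mem' := by
    intro f f' hf hf' g h k
    have h1 := hf g h k; have h2 := hf' g h k
    simp only [Pi.add_apply, smul_add]
    calc g • f h k + g • f' h k - (f (g * h) k + f' (g * h) k) +
          (f g (h * k) + f' g (h * k)) - (f g h + f' g h)
        = (g • f h k - f (g * h) k + f g (h * k) - f g h) +
          (g • f' h k - f' (g * h) k + f' g (h * k) - f' g h) := by abel
      _ = 0 := by rw [h1, h2, add_zero]
  neg_mem' := by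
    intro f hf g h k
    have h1 := hf g h k
    simp only [Pi.neg_apply, smul_neg]
    calc -(g • f h k) - -f (g * h) k + -f g (h * k) - -f g h
        = -(g • f h k - f (g * h) k + f g (h * k) - f g h) := by abel
      _ = 0 := by rw [h1, neg_zero]

/-- The 2-coboundary homomorphism. -/
def cobound2Hom : (G → M) →+ Z2 G M where
  toFun u := ⟨fun g h => g • u h - u (g * h) + u g, by
    intro g h k
    simp only [mul_smul, smul_sub, smul_add, mul_assoc]
    abel⟩
  map_zero' := by apply Subtype.ext; funext g h; simp
  map_add' := by
    intro a b; apply Subtype.ext; funext g h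
    show g • (a h + b h) - (a (g * h) + b (g * h)) + (a g + b g)
        = (g • a h - a (g * h) + a g) + (g • b h - b (g * h) + b g)
    simp only [smul_add]; abel

/-- 2-coboundaries. -/
def B2 : AddSubgroup (Z2 G M) := (cobound2Hom G M).range

/-- Second group cohomology `H²(G, M)`. -/
abbrev H2 := Z2 G M ⧸ B2 G M

/-- Restriction of 2-cocycles to a subgroup. -/
def resZ2 (H : Subgroup G) : Z2 G M →+ Z2 H M where
  toFun f := ⟨fun a b => f.1 a b, by
    intro a b c
    have := f.2 (a : G) (b : G) (c : G)
    exact this⟩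
  map_zero' := rfl
  map_add' := fun _ _ => rfl

/-- Restriction on `H²`. -/
def resH2 (H : Subgroup G) : H2 G M →+ H2 H M :=
  QuotientAddGroup.map _ _ (resZ2 G M H) (by
    rintro _ ⟨u, rfl⟩
    exact ⟨fun h : H => u (h : G), Subtype.ext rfl⟩)

/-- `Ш²(G, M)`. -/
def Sha2 : AddSubgroup (H2 G M) :=
  ⨅ g : G, (resH2 G M (Subgroup.zpowers g)).ker

/-- The subgroup `2M`. -/
def twoSub : AddSubgroup M :=
  (AddMonoidHom.mk' (fun m : M => (2 : ℤ) • m) (by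
    intro a b
    show (2 : ℤ) • (a + b) = (2 : ℤ) • a + (2 : ℤ) • b
    rw [smul_add])).range

/-- `M/2M`. -/
abbrev ModTwo := M ⧸ twoSub M

noncomputable instance : SMul G (ModTwo M) :=
  ⟨fun g => QuotientAddGroup.map _ _ (DistribMulAction.toAddMonoidHom M g) (by
    rintro _ ⟨m, rfl⟩
    refine ⟨g • m, ?_⟩
    show (2 : ℤ) • (g • m) = g • ((2 : ℤ) • m)
    rw [smul_comm])⟩

theorem modTwo_smul_mk (g : G) (m : M) :
    g • (QuotientAddGroup.mk m : ModTwo M) = QuotientAddGroup.mk (g • m) := rfl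

noncomputable instance : DistribMulAction G (ModTwo M) where
  one_smul x := by
    obtain ⟨m, rfl⟩ := QuotientAddGroup.mk_surjective x
    rw [modTwo_smul_mk, one_smul]
  mul_smul g h x := by
    obtain ⟨m, rfl⟩ := QuotientAddGroup.mk_surjective x
    rw [modTwo_smul_mk, modTwo_smul_mk, modTwo_smul_mk, mul_smul]
  smul_zero g := map_zero (QuotientAddGroup.map _ _ (DistribMulAction.toAddMonoidHom M g) _)
  smul_add g x y := map_add (QuotientAddGroup.map _ _ (DistribMulAction.toAddMonoidHom M g) _) x y

variable [Finite G]

/-- Kernel of the norm map (for a finite group). -/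
def normKer : AddSubgroup M where
  carrier := {x | ∑ᶠ g : G, g • x = 0}
  zero_mem' := by simp
  add_mem' := by
    intro x y hx hy
    have hx' : ∑ᶠ g : G, g • x = 0 := hx
    have hy' : ∑ᶠ g : G, g • y = 0 := hy
    show ∑ᶠ g : G, g • (x + y) = 0
    simp only [smul_add]
    rw [finsum_add_distrib (Set.toFinite _) (Set.toFinite _), hx', hy', add_zero]
  neg_mem' := by
    intro x hx
    have hx' : ∑ᶠ g : G, g • x = 0 := hx
    show ∑ᶠ g : G, g • (-x) = 0
    simp only [smul_neg]
    rw [finsum_neg_distrib, hx', neg_zero]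

/-- The subgroup generated by elements `g • m - m`. -/
def augSub : AddSubgroup M := AddSubgroup.closure {x | ∃ (g : G) (m : M), x = g • m - m}

/-- Tate cohomology `Ĥ⁻¹(G, M)` (for a finite group `G`). -/
abbrev TateNeg1 := normKer G M ⧸ ((augSub G M).addSubgroupOf (normKer G M))

/-- `M` is flasque: `Ĥ⁻¹(H, M) = 0` for all subgroups `H ≤ G`. -/
def IsFlasque : Prop := ∀ H : Subgroup G, ∀ x y : TateNeg1 H M, x = y

end Core2

section Core3
variable (G : Type) [Group G]

/-- `M` is equivalent to a direct summand of a quasi-permutation `G`-lattice. -/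
def IsEquivSummandQP (M : Type) [AddCommGroup M] [DistribMulAction G M] : Prop :=
  ∃ (S : Type) (_ : AddCommGroup S) (_ : DistribMulAction G S)
    (D : Type) (_ : AddCommGroup D) (_ : DistribMulAction G D)
    (D' : Type) (_ : AddCommGroup D') (_ : DistribMulAction G D'),
    IsLat S ∧ IsQuasiPerm G S ∧ (∃ e : (D × D') ≃+ S, IsEquivMapP G e) ∧
    LatEquiv G M D

end Core3

section Tensor
open TensorProduct
variable (G : Type) [Group G] (M : Type) [AddCommGroup M] [DistribMulAction G M]

/-- The action of `g : G` as a `ℤ`-linear map. -/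
def gLin (g : G) : M →ₗ[ℤ] M := (DistribMulAction.toAddMonoidHom M g).toIntLinearMap

noncomputable instance tensorSMul : SMul G (M ⊗[ℤ] M) :=
  ⟨fun g => TensorProduct.map (gLin G M g) (gLin G M g)⟩

theorem tsmul_def (g : G) (x : M ⊗[ℤ] M) :
    g • x = TensorProduct.map (gLin G M g) (gLin G M g) x := rfl

theorem gLin_one : gLin G M 1 = LinearMap.id := by
  ext m; show (1 : G) • m = m; rw [one_smul]

theorem gLin_mul (g h : G) : gLin G M (g * h) = (gLin G M g).comp (gLin G M h) := by
  ext m; show (g * h) • m = g • h • m; rw [mul_smul]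

noncomputable instance tensorAct : DistribMulAction G (M ⊗[ℤ] M) where
  one_smul x := by rw [tsmul_def, gLin_one, TensorProduct.map_id]; rfl
  mul_smul g h x := by
    rw [tsmul_def, tsmul_def, tsmul_def, gLin_mul, TensorProduct.map_comp]; rfl
  smul_zero g := map_zero _
  smul_add g x y := map_add _ x y

/-- Generators of the symmetric relation. -/
def symSpan : @Submodule ℤ (M ⊗[ℤ] M) _ _ TensorProduct.instModule :=
  @Submodule.span ℤ (M ⊗[ℤ] M) _ _ TensorProduct.instModule {x | ∃ a b : M, x = a ⊗ₜ[ℤ] b - b ⊗ₜ[ℤ] a}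

/-- Generators of the wedge relation. -/
def wedSpan : @Submodule ℤ (M ⊗[ℤ] M) _ _ TensorProduct.instModule :=
  @Submodule.span ℤ (M ⊗[ℤ] M) _ _ TensorProduct.instModule {x | ∃ a : M, x = a ⊗ₜ[ℤ] a}

/-- The second symmetric power `Sym²M`. -/
abbrev Sym2Q := (M ⊗[ℤ] M) ⧸ symSpan M

/-- The second exterior power `∧²M`. -/
abbrev Wedge2Q := (M ⊗[ℤ] M) ⧸ wedSpan M

theorem symSpan_le_comap (g : G) :
    symSpan M ≤ (symSpan M).comap (TensorProduct.map (gLin G M g) (gLin G M g)) := by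
  rw [← Submodule.map_le_iff_le_comap, symSpan, Submodule.map_span]
  refine Submodule.span_le.2 ?_
  rintro _ ⟨_, ⟨a, b, rfl⟩, rfl⟩
  refine Submodule.subset_span ?_
  exact ⟨g • a, g • b, by simp [TensorProduct.map_tmul]; rfl⟩

theorem wedSpan_le_comap (g : G) :
    wedSpan M ≤ (wedSpan M).comap (TensorProduct.map (gLin G M g) (gLin G M g)) := by
  rw [← Submodule.map_le_iff_le_comap, wedSpan, Submodule.map_span]
  refine Submodule.span_le.2 ?_
  rintro _ ⟨_, ⟨a, rfl⟩, rfl⟩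
  exact Submodule.subset_span ⟨g • a, by simp [TensorProduct.map_tmul]; rfl⟩

noncomputable instance sym2SMul : SMul G (Sym2Q M) :=
  ⟨fun g => Submodule.mapQ _ _ (TensorProduct.map (gLin G M g) (gLin G M g))
    (symSpan_le_comap G M g)⟩

noncomputable instance wedge2SMul : SMul G (Wedge2Q M) :=
  ⟨fun g => Submodule.mapQ _ _ (TensorProduct.map (gLin G M g) (gLin G M g))
    (wedSpan_le_comap G M g)⟩

theorem sym2_smul_mk (g : G) (x : M ⊗[ℤ] M) :
    g • ((symSpan M).mkQ x) = (symSpan M).mkQ (g • x) :=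
  Submodule.mapQ_apply _ _ _ _

theorem wedge2_smul_mk (g : G) (x : M ⊗[ℤ] M) :
    g • ((wedSpan M).mkQ x) = (wedSpan M).mkQ (g • x) :=
  Submodule.mapQ_apply _ _ _ _

noncomputable instance sym2Act : DistribMulAction G (Sym2Q M) where
  one_smul x := by
    obtain ⟨y, rfl⟩ := (symSpan M).mkQ_surjective x
    rw [sym2_smul_mk, one_smul]
  mul_smul g h x := by
    obtain ⟨y, rfl⟩ := (symSpan M).mkQ_surjective x
    rw [sym2_smul_mk, sym2_smul_mk, sym2_smul_mk, mul_smul]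
  smul_zero g := map_zero (Submodule.mapQ _ _ _ (symSpan_le_comap G M g))
  smul_add g x y := map_add (Submodule.mapQ _ _ _ (symSpan_le_comap G M g)) x y

noncomputable instance wedge2Act : DistribMulAction G (Wedge2Q M) where
  one_smul x := by
    obtain ⟨y, rfl⟩ := (wedSpan M).mkQ_surjective x
    rw [wedge2_smul_mk, one_smul]
  mul_smul g h x := by
    obtain ⟨y, rfl⟩ := (wedSpan M).mkQ_surjective x
    rw [wedge2_smul_mk, wedge2_smul_mk, wedge2_smul_mk, mul_smul]
  smul_zero g := map_zero (Submodule.mapQ _ _ _ (wedSpan_le_comap G M g))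
  smul_add g x y := map_add (Submodule.mapQ _ _ _ (wedSpan_le_comap G M g)) x y

variable {M} {N : Type} [AddCommGroup N]

/-- The map `Sym²f` induced by a linear map `f`. -/
noncomputable def sym2Map (f : M →ₗ[ℤ] N) : Sym2Q M →ₗ[ℤ] Sym2Q N :=
  Submodule.mapQ _ _ (TensorProduct.map f f) (by
    rw [← Submodule.map_le_iff_le_comap, symSpan, Submodule.map_span]
    refine Submodule.span_le.2 ?_
    rintro _ ⟨_, ⟨a, b, rfl⟩, rfl⟩
    exact Submodule.subset_span ⟨f a, f b, by simp [TensorProduct.map_tmul]⟩)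

/-- The map `∧²f` induced by a linear map `f`. -/
noncomputable def wedge2Map (f : M →ₗ[ℤ] N) : Wedge2Q M →ₗ[ℤ] Wedge2Q N :=
  Submodule.mapQ _ _ (TensorProduct.map f f) (by
    rw [← Submodule.map_le_iff_le_comap, wedSpan, Submodule.map_span]
    refine Submodule.span_le.2 ?_
    rintro _ ⟨_, ⟨a, rfl⟩, rfl⟩
    exact Submodule.subset_span ⟨f a, by simp [TensorProduct.map_tmul]⟩)

end Tensor

section PermMod
variable (G : Type) [Group G] (X : Type) [MulAction G X]

/-- The permutation action on `ℤ[X] = X → ℤ`. -/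
instance permSMul : SMul G (X → ℤ) := ⟨fun g f x => f (g⁻¹ • x)⟩

theorem perm_smul_def (g : G) (f : X → ℤ) (x : X) : (g • f) x = f (g⁻¹ • x) := rfl

instance permAct : DistribMulAction G (X → ℤ) where
  one_smul f := funext fun x => by rw [perm_smul_def, inv_one, one_smul]
  mul_smul g h f := funext fun x => by
    rw [perm_smul_def, perm_smul_def, perm_smul_def, mul_inv_rev, mul_smul]
  smul_zero g := rfl
  smul_add g f f' := rfl

variable [Fintype X]

/-- The augmentation kernel `A = ker(ℤ[X] → ℤ)`. -/
def augKer : AddSubgroup (X → ℤ) where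
  carrier := {f | ∑ x, f x = 0}
  zero_mem' := by simp
  add_mem' := by
    intro a b ha hb
    have ha' : ∑ x, a x = 0 := ha
    have hb' : ∑ x, b x = 0 := hb
    show ∑ x, (a x + b x) = 0
    rw [Finset.sum_add_distrib, ha', hb', add_zero]
  neg_mem' := by
    intro a ha
    have ha' : ∑ x, a x = 0 := ha
    show ∑ x, (-(a x)) = 0
    rw [Finset.sum_neg_distrib, ha', neg_zero]

theorem smul_mem_augKer (g : G) (f : X → ℤ) (hf : f ∈ augKer X) :
    g • f ∈ augKer X := by
  have hf' : ∑ x, f x = 0 := hf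
  show ∑ x, f (g⁻¹ • x) = 0
  exact (Equiv.sum_comp (MulAction.toPerm (g⁻¹ : G)) f).trans hf'

instance augKerSMul : SMul G (augKer X) :=
  ⟨fun g f => ⟨g • (f : X → ℤ), smul_mem_augKer G X g f f.2⟩⟩

theorem augKer_smul_def (g : G) (f : augKer X) :
    ((g • f : augKer X) : X → ℤ) = g • (f : X → ℤ) := rfl

instance augKerAct : DistribMulAction G (augKer X) where
  one_smul f := Subtype.ext (by rw [augKer_smul_def, one_smul])
  mul_smul g h f := Subtype.ext (by
    rw [augKer_smul_def, augKer_smul_def, augKer_smul_def, mul_smul])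
  smul_zero g := Subtype.ext (by
    rw [augKer_smul_def]
    show g • (0 : X → ℤ) = 0
    rw [smul_zero])
  smul_add g f f' := Subtype.ext (by
    show g • ((f : X → ℤ) + f') = g • (f : X → ℤ) + g • (f' : X → ℤ)
    rw [smul_add])

end PermMod

section P2sec
variable (G : Type) [Group G]

/-- The set of 2-element subsets of `X`. -/
def P2 (X : Type) [DecidableEq X] : Type := {s : Finset X // s.card = 2}

noncomputable instance (X : Type) [DecidableEq X] [Fintype X] : Fintype (P2 X) := by
  unfold P2; infer_instance

instance p2SMul (X : Type) [DecidableEq X] [MulAction G X] : SMul G (P2 X) :=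
  ⟨fun g s => ⟨s.1.image (fun x => g • x), by
    rw [Finset.card_image_of_injective _ (MulAction.injective g)]; exact s.2⟩⟩

theorem p2_smul_def (X : Type) [DecidableEq X] [MulAction G X] (g : G) (s : P2 X) :
    (g • s).1 = s.1.image (fun x => g • x) := rfl

instance p2Act (X : Type) [DecidableEq X] [MulAction G X] : MulAction G (P2 X) where
  one_smul s := Subtype.ext (by
    rw [p2_smul_def]
    simp)
  mul_smul g h s := Subtype.ext (by
    simp only [p2_smul_def, Finset.image_image]
    refine Finset.image_congr ?_
    intro x _
    exact mul_smul g h x)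

end P2sec

/-- The root lattice `A_{n-1}` as an `S_n`-lattice. -/
abbrev rootLat (n : ℕ) := augKer (Fin n)


section Hidden
attribute [-instance] augKerSMul
namespace ShaAux

open scoped BigOperators

section Basic
variable (C : Type) [Group C] (X : Type) [Fintype X]

/-- subgroup of ℤ of augmentations of invariant functions -/
def invAug [MulAction C X] : AddSubgroup ℤ where
  carrier := {t | ∃ v : X → ℤ, (∀ (c : C) (x : X), v (c • x) = v x) ∧ ∑ x, v x = t}
  zero_mem' := ⟨0, fun _ _ => rfl, by simp⟩
  add_mem' := by
    rintro s t ⟨v, hv, rfl⟩ ⟨w, hw, rfl⟩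
    exact ⟨v + w, fun c x => by simp [hv c x, hw c x],
      by rw [← Finset.sum_add_distrib]; rfl⟩
  neg_mem' := by
    rintro t ⟨v, hv, rfl⟩
    exact ⟨-v, fun c x => by simp [hv c x], by simp⟩

variable {C X}

theorem mem_invAug [MulAction C X] {t : ℤ} :
    t ∈ invAug C X ↔ ∃ v : X → ℤ, (∀ (c : C) (x : X), v (c • x) = v x) ∧ ∑ x, v x = t :=
  Iff.rfl

variable [MulAction C X]

/-- the coboundary of `u : ℤ[X]` as a function `C → augKer X` -/
def cobF (u : X → ℤ) : C → augKer X := fun c =>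
  ⟨fun x => u (c⁻¹ • x) - u x, by
    have h1 : ∑ x, u (c⁻¹ • x) = ∑ x, u x := Equiv.sum_comp (MulAction.toPerm (c⁻¹ : C)) u
    show ∑ x, (u (c⁻¹ • x) - u x) = 0
    rw [Finset.sum_sub_distrib, h1, sub_self]⟩

theorem cobF_coe (u : X → ℤ) (c : C) (x : X) :
    ((cobF (C := C) u c : augKer X) : X → ℤ) x = u (c⁻¹ • x) - u x := rfl

end Basic

section Mod
variable {C : Type} [Group C] {X : Type} [Fintype X] [MulAction C X]
variable [inst : DistribMulAction C (augKer X)]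

/-- compatibility of the abstract module action with the permutation action -/
def HAct : Prop :=
  ∀ (c : C) (v : augKer X) (x : X), ((c • v : augKer X) : X → ℤ) x = (v : X → ℤ) (c⁻¹ • x)

variable (hact : HAct (C := C) (X := X))

include hact in
theorem cobF_mem (u : X → ℤ) : cobF (C := C) u ∈ Z1 C (augKer X) := by
  intro g h
  apply Subtype.ext
  funext x
  show ((cobF (C := C) u (g * h) : augKer X) : X → ℤ) x
      = ((g • cobF (C := C) u h + cobF (C := C) u g : augKer X) : X → ℤ) x
  calc ((cobF (C := C) u (g * h) : augKer X) : X → ℤ) x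
      = u ((g * h)⁻¹ • x) - u x := rfl
    _ = (u (h⁻¹ • (g⁻¹ • x)) - u (g⁻¹ • x)) + (u (g⁻¹ • x) - u x) := by
        rw [mul_inv_rev, mul_smul]; ring
    _ = ((g • cobF (C := C) u h + cobF (C := C) u g : augKer X) : X → ℤ) x := by
        rw [AddSubgroup.coe_add, Pi.add_apply, hact g _ x]; rfl

/-- the coboundary of `u` as a cocycle -/
def cobZ (u : X → ℤ) : Z1 C (augKer X) := ⟨cobF (C := C) u, cobF_mem hact u⟩

theorem cobZ_add (u u' : X → ℤ) :
    cobZ hact (u + u') = cobZ hact u + cobZ hact u' := by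
  apply Subtype.ext; funext c; apply Subtype.ext; funext x
  show (u + u') (c⁻¹ • x) - (u + u') x
      = (u (c⁻¹ • x) - u x) + (u' (c⁻¹ • x) - u' x)
  simp only [Pi.add_apply]
  ring

end Mod
end ShaAux
end Hidden
section Hidden2
attribute [-instance] augKerSMul
namespace ShaAux

theorem sum_single {X : Type} [Fintype X] [DecidableEq X] (x₀ : X) (k : ℤ) :
    ∑ x, Pi.single x₀ k x = k := by
  rw [Finset.sum_pi_single']
  simp

section Mod
variable {C : Type} [Group C] {X : Type} [Fintype X] [MulAction C X]
variable [inst : DistribMulAction C (augKer X)]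
variable (hact : HAct (C := C) (X := X))

include hact in
theorem exists_cob [Finite C] (f : Z1 C (augKer X)) : ∃ u : X → ℤ, f = cobZ hact u := by
  classical
  have f1 : ((f : C → augKer X) 1 : X → ℤ) = 0 := by
    have h0 := f.2 1 1
    rw [one_mul, one_smul] at h0
    have h1 : (f : C → augKer X) 1 = 0 := by
      have := add_left_cancel (show (f : C → augKer X) 1 + (f : C → augKer X) 1 = (f : C → augKer X) 1 + 0 by rw [add_zero]; exact h0.symm)
      exact this
    rw [h1]; rfl
  have key : ∀ (g h : C) (x : X), ((f : C → augKer X) (g * h) : X → ℤ) x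
      = ((f : C → augKer X) h : X → ℤ) (g⁻¹ • x) + ((f : C → augKer X) g : X → ℤ) x := by
    intro g h x
    have h1 : ((g • (f : C → augKer X) h + (f : C → augKer X) g : augKer X) : X → ℤ) x
        = ((f : C → augKer X) h : X → ℤ) (g⁻¹ • x) + ((f : C → augKer X) g : X → ℤ) x := by
      rw [AddSubgroup.coe_add, Pi.add_apply, hact]
    have h0 : (f : C → augKer X) (g * h) = g • (f : C → augKer X) h + (f : C → augKer X) g := f.2 g h
    rw [h0, h1]
  have sval : ∀ (ρ : X) (s : C), s • ρ = ρ → ((f : C → augKer X) s : X → ℤ) ρ = 0 := by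
    intro ρ s hs
    have hfix : ∀ k : ℕ, s ^ k • ρ = ρ := by
      intro k; induction k with
      | zero => simp
      | succ k ih => rw [pow_succ, mul_smul, hs, ih]
    have hpow : ∀ k : ℕ, ((f : C → augKer X) (s ^ k) : X → ℤ) ρ = k * ((f : C → augKer X) s : X → ℤ) ρ := by
      intro k; induction k with
      | zero => rw [pow_zero]; rw [f1]; simp
      | succ k ih =>
        rw [pow_succ, key (s ^ k) s ρ]
        have : (s ^ k)⁻¹ • ρ = ρ := by
          rw [inv_smul_eq_iff, hfix k]
        rw [this, hs] at *
        rw [ih]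
        push_cast; ring
    have hN := hpow (orderOf s)
    rw [pow_orderOf_eq_one, f1] at hN
    have hNpos : (0:ℤ) < (orderOf s : ℤ) := by exact_mod_cast orderOf_pos s
    have := hN.symm
    rcases mul_eq_zero.mp this with h | h
    · exact absurd h (by positivity)
    · exact h
  -- orbit representatives
  let rep : X → X := fun x => (Quotient.mk (MulAction.orbitRel C X) x).out
  have hrep : ∀ x : X, ∃ g : C, g • rep x = x := by
    intro x
    have h : (MulAction.orbitRel C X) (Quotient.mk (MulAction.orbitRel C X) x).out x :=
      Quotient.mk_out (s := MulAction.orbitRel C X) x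
    rw [MulAction.orbitRel_apply] at h
    obtain ⟨g, hg⟩ := h
    refine ⟨g⁻¹, ?_⟩
    have hg' : g • x = rep x := hg
    rw [← hg', inv_smul_smul]
  let τ : X → C := fun x => (hrep x).choose
  have hτ : ∀ x : X, τ x • rep x = x := fun x => (hrep x).choose_spec
  have rep_smul : ∀ (g : C) (x : X), rep (g⁻¹ • x) = rep x := by
    intro g x
    have : (Quotient.mk (MulAction.orbitRel C X) (g⁻¹ • x)) = Quotient.mk (MulAction.orbitRel C X) x :=
      Quotient.sound (MulAction.mem_orbit x g⁻¹)
    simpa [rep] using congrArg Quotient.out this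
  have indep : ∀ (x : X) (t : C), t • rep x = x →
      ((f : C → augKer X) t : X → ℤ) x = ((f : C → augKer X) (τ x) : X → ℤ) x := by
    intro x t ht
    have h2 : (τ x)⁻¹ • x = rep x := by
      rw [inv_smul_eq_iff]; exact (hτ x).symm
    have hs : ((τ x)⁻¹ * t) • rep x = rep x := by
      rw [mul_smul, ht, h2]
    have hk := key (τ x) ((τ x)⁻¹ * t) x
    rw [show τ x * ((τ x)⁻¹ * t) = t by group, h2, sval _ _ hs, zero_add] at hk
    exact hk
  refine ⟨fun x => -((f : C → augKer X) (τ x) : X → ℤ) x, ?_⟩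
  apply Subtype.ext; funext g; apply Subtype.ext; funext x
  show ((f : C → augKer X) g : X → ℤ) x
      = -((f : C → augKer X) (τ (g⁻¹ • x)) : X → ℤ) (g⁻¹ • x) - -((f : C → augKer X) (τ x) : X → ℤ) x
  have e1 : ((f : C → augKer X) (τ (g⁻¹ • x)) : X → ℤ) (g⁻¹ • x)
      = ((f : C → augKer X) (g⁻¹ * τ x) : X → ℤ) (g⁻¹ • x) := by
    refine (indep (g⁻¹ • x) (g⁻¹ * τ x) ?_).symm
    rw [rep_smul, mul_smul, hτ]
  have e2 : ((f : C → augKer X) (g⁻¹ * τ x) : X → ℤ) (g⁻¹ • x)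
      = ((f : C → augKer X) (τ x) : X → ℤ) x + ((f : C → augKer X) g⁻¹ : X → ℤ) (g⁻¹ • x) := by
    have := key g⁻¹ (τ x) (g⁻¹ • x)
    rw [inv_inv, smul_inv_smul] at this
    exact this
  have e3 : ((f : C → augKer X) g⁻¹ : X → ℤ) (g⁻¹ • x) = -((f : C → augKer X) g : X → ℤ) x := by
    have := key g g⁻¹ x
    rw [mul_inv_cancel, f1] at this
    simp only [Pi.zero_apply] at this
    linarith
  rw [e1, e2, e3]; ring

include hact in
theorem mk_cob_eq_zero_iff (u : X → ℤ) :
    (QuotientAddGroup.mk (cobZ hact u) : H1 C (augKer X)) = 0 ↔ (∑ x, u x) ∈ invAug C X := by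
  rw [QuotientAddGroup.eq_zero_iff]
  have hB : (cobZ hact u ∈ B1 C (augKer X)) ↔ ∃ m : augKer X, coboundHom C (augKer X) m = cobZ hact u :=
    Iff.rfl
  rw [hB]
  constructor
  · rintro ⟨m, hm⟩
    have hmc : ∀ (c : C) (x : X), (m : X → ℤ) (c⁻¹ • x) - (m : X → ℤ) x = u (c⁻¹ • x) - u x := by
      intro c x
      have h1 : ((c • m - m : augKer X) : X → ℤ) x = u (c⁻¹ • x) - u x :=
        congrFun (congrArg (fun (z : Z1 C (augKer X)) => ((z : C → augKer X) c : X → ℤ)) hm) x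
      rw [AddSubgroup.coe_sub, Pi.sub_apply, hact] at h1
      exact h1
    refine ⟨u - (m : X → ℤ), ?_, ?_⟩
    · intro c x
      have := hmc c (c • x)
      rw [inv_smul_smul] at this
      simp only [Pi.sub_apply]
      linarith
    · have hm0 : ∑ x, (m : X → ℤ) x = 0 := m.2
      simp only [Pi.sub_apply]
      rw [Finset.sum_sub_distrib]
      simp [hm0]
  · rintro ⟨v, hv, hsum⟩
    refine ⟨⟨u - v, ?_⟩, ?_⟩
    · show ∑ x, (u x - v x) = 0
      rw [Finset.sum_sub_distrib, hsum, sub_self]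
    · apply Subtype.ext; funext c; apply Subtype.ext; funext x
      show ((c • (⟨u - v, _⟩ : augKer X) - ⟨u - v, _⟩ : augKer X) : X → ℤ) x = u (c⁻¹ • x) - u x
      rw [AddSubgroup.coe_sub, Pi.sub_apply, hact]
      show (u (c⁻¹ • x) - v (c⁻¹ • x)) - (u x - v x) = u (c⁻¹ • x) - u x
      rw [hv c⁻¹ x]
      ring

end Mod

theorem mem_invAug_zpowers_iff {C : Type} [Group C] {X : Type} [Fintype X] [MulAction C X]
    (c : C) {t : ℤ} :
    t ∈ invAug ↥(Subgroup.zpowers c) X ↔ ∃ v : X → ℤ, (∀ x, v (c • x) = v x) ∧ ∑ x, v x = t := by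
  constructor
  · rintro ⟨v, hv, rfl⟩
    exact ⟨v, fun x => hv ⟨c, Subgroup.mem_zpowers c⟩ x, rfl⟩
  · rintro ⟨v, hv, rfl⟩
    refine ⟨v, ?_, rfl⟩
    intro s x
    let K : Subgroup C :=
      { carrier := {g | ∀ y : X, v (g • y) = v y}
        one_mem' := by intro y; rw [one_smul]
        mul_mem' := by
          intro a b ha hb y
          rw [mul_smul, ha, hb]
        inv_mem' := by
          intro a ha y
          have := ha (a⁻¹ • y)
          rw [smul_inv_smul] at this
          exact this.symm }
    have hcK : c ∈ K := hv
    have hK : (s : C) ∈ K := Subgroup.zpowers_le.mpr hcK s.2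
    exact hK x

end ShaAux
end Hidden2
section Hidden3
attribute [-instance] augKerSMul
namespace ShaAux

section Mod2
variable {C : Type} [Group C] {X : Type} [Fintype X] [MulAction C X]
variable [inst : DistribMulAction C (augKer X)]
variable (hact : HAct (C := C) (X := X))

include hact in
theorem mem_sha1_iff (u : X → ℤ) :
    (QuotientAddGroup.mk (cobZ hact u) : H1 C (augKer X)) ∈ Sha1 C (augKer X)
      ↔ ∀ c : C, (∑ x, u x) ∈ invAug ↥(Subgroup.zpowers c) X := by
  rw [Sha1, AddSubgroup.mem_iInf]
  refine forall_congr' fun c => ?_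
  rw [AddMonoidHom.mem_ker]
  have hactS : HAct (C := ↥(Subgroup.zpowers c)) (X := X)
      (inst := Subgroup.instDistribMulActionSubtypeMem (Subgroup.zpowers c)) :=
    fun s v x => hact (↑s) v x
  have h1 : resH1 C (augKer X) (Subgroup.zpowers c) (QuotientAddGroup.mk (cobZ hact u))
      = QuotientAddGroup.mk (resZ1 C (augKer X) (Subgroup.zpowers c) (cobZ hact u)) := rfl
  have h2 : resZ1 C (augKer X) (Subgroup.zpowers c) (cobZ hact u) = cobZ hactS u := rfl
  rw [h1, h2, mk_cob_eq_zero_iff hactS u]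

end Mod2
end ShaAux
end Hidden3
section Hidden4
attribute [-instance] augKerSMul
namespace ShaAux

section Mod3
variable {C : Type} [Group C] {X : Type} [Fintype X] [MulAction C X]
variable [inst : DistribMulAction C (augKer X)]
variable (hact : HAct (C := C) (X := X))

theorem cobZ_sub (u u' : X → ℤ) :
    cobZ hact (u - u') = cobZ hact u - cobZ hact u' := by
  apply Subtype.ext; funext c; apply Subtype.ext; funext x
  show (u - u') (c⁻¹ • x) - (u - u') x
      = (u (c⁻¹ • x) - u x) - (u' (c⁻¹ • x) - u' x)
  simp only [Pi.sub_apply]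
  ring

end Mod3

theorem master (n p : ℕ) (hn : 0 < n) (H : Subgroup (Equiv.Perm (Fin n))) (c : ℤ) (hc : c ≠ 0)
    (hIA : invAug ↥H (Fin n) = AddSubgroup.zmultiples (c * p))
    (hii : ∀ (σ : ↥H) (k : ℤ), c * k ∈ invAug ↥(Subgroup.zpowers σ) (Fin n))
    (hiii : ∀ t : ℤ, (∀ σ : ↥H, t ∈ invAug ↥(Subgroup.zpowers σ) (Fin n)) → c ∣ t) :
    Nonempty ((Sha1 H (rootLat n)) ≃+ ZMod p) := by
  classical
  have hactH : HAct (C := ↥H) (X := Fin n) := fun _ _ _ => rfl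
  let x₀ : Fin n := ⟨0, hn⟩
  have key_mem : ∀ k : ℤ,
      (QuotientAddGroup.mk (cobZ hactH (Pi.single x₀ (c * k))) : H1 ↥H (rootLat n))
        ∈ Sha1 ↥H (rootLat n) := by
    intro k
    refine (mem_sha1_iff hactH _).2 fun σ => ?_
    rw [sum_single]
    exact hii σ k
  let Θ : ℤ →+ ↥(Sha1 ↥H (rootLat n)) := AddMonoidHom.mk'
    (fun k => ⟨QuotientAddGroup.mk (cobZ hactH (Pi.single x₀ (c * k))), key_mem k⟩)
    (by
      intro a b
      apply Subtype.ext
      show (QuotientAddGroup.mk (cobZ hactH (Pi.single x₀ (c * (a + b)))) : H1 ↥H (rootLat n))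
          = QuotientAddGroup.mk (cobZ hactH (Pi.single x₀ (c * a)))
            + QuotientAddGroup.mk (cobZ hactH (Pi.single x₀ (c * b)))
      have hsplit : (Pi.single x₀ (c * (a + b)) : Fin n → ℤ) = Pi.single x₀ (c * a) + Pi.single x₀ (c * b) := by
        rw [mul_add, Pi.single_add]
      rw [hsplit, cobZ_add hactH]
      rfl)
  have hsurj : Function.Surjective Θ := by
    rintro ⟨q, hq⟩
    obtain ⟨f, rfl⟩ := QuotientAddGroup.mk_surjective q
    obtain ⟨u, rfl⟩ := exists_cob hactH f
    have h1 : ∀ σ : ↥H, (∑ x, u x) ∈ invAug ↥(Subgroup.zpowers σ) (Fin n) :=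
      (mem_sha1_iff hactH u).1 hq
    obtain ⟨k, hk⟩ := hiii _ h1
    refine ⟨k, ?_⟩
    apply Subtype.ext
    show (QuotientAddGroup.mk (cobZ hactH (Pi.single x₀ (c * k))) : H1 ↥H (rootLat n))
        = QuotientAddGroup.mk (cobZ hactH u)
    have hz : (QuotientAddGroup.mk (cobZ hactH (u - Pi.single x₀ (c * k))) : H1 ↥H (rootLat n)) = 0 := by
      refine (mk_cob_eq_zero_iff hactH _).2 ?_
      have : ∑ x : Fin n, (u - Pi.single x₀ (c * k) : Fin n → ℤ) x = 0 := by
        simp only [Pi.sub_apply]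
        rw [Finset.sum_sub_distrib, sum_single, ← hk, sub_self]
      rw [this]
      exact zero_mem _
    rw [cobZ_sub hactH] at hz
    have hz2 : (QuotientAddGroup.mk (cobZ hactH u) : H1 ↥H (rootLat n))
        - QuotientAddGroup.mk (cobZ hactH (Pi.single x₀ (c * k))) = 0 := hz
    have := sub_eq_zero.mp hz2
    exact this.symm
  have hker : Θ.ker = AddSubgroup.zmultiples (p : ℤ) := by
    ext k
    rw [AddMonoidHom.mem_ker]
    constructor
    · intro h0
      have h0' : (QuotientAddGroup.mk (cobZ hactH (Pi.single x₀ (c * k))) : H1 ↥H (rootLat n)) = 0 :=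
        congrArg Subtype.val h0
      have h2 := (mk_cob_eq_zero_iff hactH _).1 h0'
      rw [sum_single, hIA, AddSubgroup.mem_zmultiples_iff] at h2
      obtain ⟨j, hj⟩ := h2
      rw [AddSubgroup.mem_zmultiples_iff]
      refine ⟨j, ?_⟩
      have hj' : c * (j * p) = c * k := by
        rw [← hj, smul_eq_mul]; ring
      have := mul_left_cancel₀ hc hj'
      simpa using this
    · intro hk
      rw [AddSubgroup.mem_zmultiples_iff] at hk
      obtain ⟨j, hj⟩ := hk
      apply Subtype.ext
      show (QuotientAddGroup.mk (cobZ hactH (Pi.single x₀ (c * k))) : H1 ↥H (rootLat n)) = 0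
      refine (mk_cob_eq_zero_iff hactH _).2 ?_
      rw [sum_single, hIA, AddSubgroup.mem_zmultiples_iff]
      refine ⟨j, ?_⟩
      rw [smul_eq_mul, ← hj, smul_eq_mul]
      ring
  have e1 : (ℤ ⧸ AddSubgroup.zmultiples ((p : ℕ) : ℤ)) ≃+ ↥(Sha1 ↥H (rootLat n)) := by
    rw [← hker]
    exact QuotientAddGroup.quotientKerEquivOfSurjective Θ hsurj
  exact ⟨(e1.symm.trans (Int.quotientZMultiplesNatEquivZMod p))⟩

end ShaAux
end Hidden4
section Hidden5
attribute [-instance] augKerSMul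
namespace ShaAux

/-- conjugation of permutation groups by an equivalence, as a hom -/
def permCongrHom {X Y : Type} (e : X ≃ Y) : Equiv.Perm X →* Equiv.Perm Y where
  toFun σ := (e.symm.trans σ).trans e
  map_one' := by ext y; simp
  map_mul' σ τ := by ext y; simp [Equiv.Perm.mul_apply]

theorem permCongrHom_apply {X Y : Type} (e : X ≃ Y) (σ : Equiv.Perm X) (y : X) :
    permCongrHom e σ (e y) = e (σ y) := by
  simp [permCongrHom]

section CaseA
variable (p m : ℕ) [NeZero p]

/-- the translation functional for the fiber over `j` -/
def Fm (j : Fin m) (g : ZMod p × ZMod p) : ZMod p :=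
  if (j : ℕ) < p then g.1 + ((j : ℕ) : ZMod p) * g.2 else g.2

theorem Fm_add (j : Fin m) (g g' : ZMod p × ZMod p) :
    Fm p m j (g + g') = Fm p m j g + Fm p m j g' := by
  simp only [Fm, Prod.fst_add, Prod.snd_add]
  split_ifs <;> ring

/-- the action of `(ZMod p)²` on `Fin m × ZMod p` by fiberwise translations -/
def apermA (g : ZMod p × ZMod p) : Equiv.Perm (Fin m × ZMod p) where
  toFun y := (y.1, y.2 + Fm p m y.1 g)
  invFun y := (y.1, y.2 - Fm p m y.1 g)
  left_inv y := by simp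
  right_inv y := by simp

theorem apermA_add (g g' : ZMod p × ZMod p) :
    apermA p m (g + g') = apermA p m g * apermA p m g' := by
  refine Equiv.ext fun y => ?_
  show (y.1, y.2 + Fm p m y.1 (g + g')) = (y.1, y.2 + Fm p m y.1 g' + Fm p m y.1 g)
  rw [Fm_add, add_assoc, add_comm (Fm p m y.1 g)]

variable (n : ℕ) (e : (Fin m × ZMod p) ≃ Fin n)

/-- the action on `Fin n` -/
def alphaA : Multiplicative (ZMod p × ZMod p) →* Equiv.Perm (Fin n) :=
  MonoidHom.mk' (fun g => permCongrHom e (apermA p m (Multiplicative.toAdd g)))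
    (by
      intro g g'
      show permCongrHom e (apermA p m (Multiplicative.toAdd g + Multiplicative.toAdd g')) = _
      rw [apermA_add, map_mul])

theorem alphaA_apply (g : Multiplicative (ZMod p × ZMod p)) (y : Fin m × ZMod p) :
    alphaA p m n e g (e y) = e (apermA p m (Multiplicative.toAdd g) y) :=
  permCongrHom_apply e _ y

end CaseA

theorem caseA (n p m : ℕ) (hp : p.Prime) (hn : n = p * m) (hpm : p < m) :
    ∃ H : Subgroup (Equiv.Perm (Fin n)),
      Nonempty (H ≃* Multiplicative (ZMod p × ZMod p)) ∧
      Nonempty (Sha1 H (rootLat n) ≃+ ZMod p) := by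
  classical
  haveI : Fact p.Prime := ⟨hp⟩
  haveI : NeZero p := ⟨hp.pos.ne'⟩
  have h0m : 0 < m := lt_trans hp.pos hpm
  have hcard : Fintype.card (Fin m × ZMod p) = n := by
    rw [Fintype.card_prod, Fintype.card_fin, ZMod.card, hn, mul_comm]
  obtain e : (Fin m × ZMod p) ≃ Fin n := Fintype.equivFinOfCardEq hcard
  set α := alphaA p m n e with hα
  have happ : ∀ (g : Multiplicative (ZMod p × ZMod p)) (y : Fin m × ZMod p),
      α g (e y) = e (apermA p m (Multiplicative.toAdd g) y) := fun g y => alphaA_apply p m n e g y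
  have hsymm : ∀ (g : Multiplicative (ZMod p × ZMod p)) (x : Fin n),
      e.symm (α g x) = apermA p m (Multiplicative.toAdd g) (e.symm x) := by
    intro g x
    conv_lhs => rw [← e.apply_symm_apply x, happ g, e.symm_apply_apply]
  have hn0 : 0 < n := by rw [hn]; exact Nat.mul_pos hp.pos h0m
  -- injectivity
  have hinj : Function.Injective α := by
    refine (injective_iff_map_eq_one α).2 ?_
    intro g hg
    have hpt : ∀ y : Fin m × ZMod p, apermA p m (Multiplicative.toAdd g) y = y := by
      intro y
      have h1 := Equiv.ext_iff.mp hg (e y)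
      rw [happ] at h1
      exact e.injective h1
    have e1 := congrArg Prod.snd (hpt ((⟨0, h0m⟩ : Fin m), 0))
    have e2 := congrArg Prod.snd (hpt ((⟨p, hpm⟩ : Fin m), 0))
    simp only [apermA, Equiv.coe_fn_mk, Fm] at e1 e2
    rw [if_pos (show ((⟨0, h0m⟩ : Fin m) : ℕ) < p from hp.pos)] at e1
    rw [if_neg (show ¬ ((⟨p, hpm⟩ : Fin m) : ℕ) < p from lt_irrefl p)] at e2
    simp only [Nat.cast_zero, zero_mul, add_zero, zero_add] at e1 e2
    have : Multiplicative.toAdd g = 0 := Prod.ext e1 e2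
    have h2 := congrArg Multiplicative.ofAdd this
    simpa using h2
  set H := α.range with hH
  refine ⟨H, ⟨(MonoidHom.ofInjective hinj).symm⟩, ?_⟩
  -- preliminary facts about the action of subgroup elements
  have hsm : ∀ (σ : ↥H) (x : Fin n), σ • x = (σ : Equiv.Perm (Fin n)) x := fun _ _ => rfl
  -- step: translation by one in each fiber
  have hstep : ∀ (j : Fin m), ∃ g : Multiplicative (ZMod p × ZMod p),
      ∀ t : ZMod p, apermA p m (Multiplicative.toAdd g) (j, t) = (j, t + 1) := by
    intro j
    refine ⟨Multiplicative.ofAdd (if (j : ℕ) < p then ((1 : ZMod p), (0 : ZMod p)) else (0, 1)), fun t => ?_⟩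
    show (j, t + Fm p m j _) = (j, t + 1)
    have : Fm p m j (Multiplicative.toAdd (Multiplicative.ofAdd
        (if (j : ℕ) < p then ((1 : ZMod p), (0 : ZMod p)) else (0, 1)))) = 1 := by
      by_cases hj : (j : ℕ) < p <;> simp [Fm, hj]
    rw [this]
  -- (i)
  have hIA : invAug ↥H (Fin n) = AddSubgroup.zmultiples ((1 : ℤ) * p) := by
    apply le_antisymm
    · rintro t ⟨v, hv, rfl⟩
      set w : Fin m × ZMod p → ℤ := fun y => v (e y) with hw
      have hwinv : ∀ (g : Multiplicative (ZMod p × ZMod p)) (y : Fin m × ZMod p),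
          w (apermA p m (Multiplicative.toAdd g) y) = w y := by
        intro g y
        have := hv ⟨α g, ⟨g, rfl⟩⟩ (e y)
        rw [hsm, happ] at this
        exact this
      have hfiber : ∀ (j : Fin m) (t : ZMod p), w (j, t) = w (j, 0) := by
        intro j t
        obtain ⟨g, hg⟩ := hstep j
        have hnat : ∀ k : ℕ, w (j, (k : ZMod p)) = w (j, 0) := by
          intro k
          induction k with
          | zero => simp
          | succ k ih =>
            have := hwinv g (j, (k : ZMod p))
            rw [hg] at this
            rw [← ih, ← this]
            push_cast
            ring_nf
        have := hnat (ZMod.val t)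
        rwa [ZMod.natCast_val, ZMod.cast_id] at this
      rw [AddSubgroup.mem_zmultiples_iff]
      refine ⟨∑ j : Fin m, w (j, 0), ?_⟩
      rw [smul_eq_mul, one_mul]
      have h1 : ∑ x : Fin n, v x = ∑ y : Fin m × ZMod p, w y := (Equiv.sum_comp e (fun x => v x)).symm
      rw [h1, Fintype.sum_prod_type]
      have h2 : ∀ j : Fin m, ∑ t : ZMod p, w (j, t) = (p : ℤ) * w (j, 0) := by
        intro j
        rw [Finset.sum_congr rfl (fun t _ => hfiber j t), Finset.sum_const]
        simp [ZMod.card, mul_comm]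
      rw [Finset.sum_congr rfl (fun j _ => h2 j), ← Finset.mul_sum]
      ring
    · intro t ht
      rw [AddSubgroup.mem_zmultiples_iff] at ht
      obtain ⟨k, hk⟩ := ht
      rw [← hk]
      refine AddSubgroup.zsmul_mem _ ?_ k
      -- show (1*p : ℤ) ∈ invAug
      refine ⟨fun x => if (e.symm x).1 = (⟨0, h0m⟩ : Fin m) then 1 else 0, ?_, ?_⟩
      · intro σ x
        obtain ⟨g, hg⟩ := σ.2
        rw [hsm, ← hg]
        show (if (e.symm ((α g) x)).1 = (⟨0, h0m⟩ : Fin m) then (1:ℤ) else 0)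
            = if (e.symm x).1 = (⟨0, h0m⟩ : Fin m) then (1:ℤ) else 0
        rw [hsymm]
        rfl
      · have h1 := Equiv.sum_comp e (fun x => if (e.symm x).1 = (⟨0, h0m⟩ : Fin m) then (1:ℤ) else 0)
        rw [← h1]
        simp only [Equiv.symm_apply_apply]
        rw [Fintype.sum_prod_type]
        have h2 : ∀ j : Fin m, ∑ _t : ZMod p, (if j = (⟨0, h0m⟩ : Fin m) then (1:ℤ) else 0)
            = if j = (⟨0, h0m⟩ : Fin m) then (p : ℤ) else 0 := by
          intro j
          rw [Finset.sum_const]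
          split_ifs <;> simp [ZMod.card]
        rw [Finset.sum_congr rfl (fun j _ => h2 j), Finset.sum_ite_eq' Finset.univ]
        simp
  -- (ii)
  have hii : ∀ (σ : ↥H) (k : ℤ), (1:ℤ) * k ∈ invAug ↥(Subgroup.zpowers σ) (Fin n) := by
    intro σ k
    obtain ⟨g, hg⟩ := σ.2
    -- find a fixed point of σ
    have hfix : ∃ x : Fin n, (σ : Equiv.Perm (Fin n)) x = x := by
      by_cases h2 : (Multiplicative.toAdd g).2 = 0
      · refine ⟨e ((⟨p, hpm⟩ : Fin m), 0), ?_⟩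
        rw [← hg, happ]
        congr 1
        show ((⟨p, hpm⟩ : Fin m), (0 : ZMod p) + Fm p m (⟨p, hpm⟩ : Fin m) _) = _
        rw [Fm, if_neg (lt_irrefl p), h2, add_zero]
      · set lam : ZMod p := -(Multiplicative.toAdd g).1 / (Multiplicative.toAdd g).2 with hlam
        have hvlt : (ZMod.val lam) < m := lt_trans (ZMod.val_lt lam) hpm
        refine ⟨e ((⟨ZMod.val lam, hvlt⟩ : Fin m), 0), ?_⟩
        rw [← hg, happ]
        congr 1
        show ((⟨ZMod.val lam, hvlt⟩ : Fin m), (0 : ZMod p) + Fm p m (⟨ZMod.val lam, hvlt⟩ : Fin m) _) = _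
        have hF : Fm p m (⟨ZMod.val lam, hvlt⟩ : Fin m) (Multiplicative.toAdd g) = 0 := by
          rw [Fm, if_pos (show (ZMod.val lam) < p from ZMod.val_lt lam)]
          have hcast : (((⟨ZMod.val lam, hvlt⟩ : Fin m) : ℕ) : ZMod p) = lam := by
            show ((ZMod.val lam : ℕ) : ZMod p) = lam
            rw [ZMod.natCast_val, ZMod.cast_id]
          rw [hcast, hlam, div_mul_cancel₀ _ h2]
          simp
        rw [hF, add_zero]
    obtain ⟨x₁, hx₁⟩ := hfix
    rw [mem_invAug_zpowers_iff]
    refine ⟨Pi.single x₁ k, ?_, by rw [sum_single, one_mul]⟩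
    intro x
    rw [hsm]
    rcases eq_or_ne x x₁ with rfl | hne
    · rw [hx₁]
    · rw [Pi.single_apply, Pi.single_apply, if_neg hne, if_neg ?_]
      intro hcon
      exact hne (by rw [← hx₁] at hcon; exact (σ : Equiv.Perm (Fin n)).injective hcon)
  -- (iii)
  have hiii : ∀ t : ℤ, (∀ σ : ↥H, t ∈ invAug ↥(Subgroup.zpowers σ) (Fin n)) → (1:ℤ) ∣ t :=
    fun t _ => one_dvd t
  exact master n p hn0 H 1 one_ne_zero hIA hii hiii

end ShaAux
end Hidden5
section Hidden6
attribute [-instance] augKerSMul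
namespace ShaAux

section CaseB
variable (p : ℕ) [NeZero p]

/-- translation action of `(ZMod p)²` on itself -/
def apermB (g : ZMod p × ZMod p) : Equiv.Perm (ZMod p × ZMod p) where
  toFun y := g + y
  invFun y := -g + y
  left_inv y := by simp
  right_inv y := by simp

theorem apermB_add (g g' : ZMod p × ZMod p) :
    apermB p (g + g') = apermB p g * apermB p g' := by
  refine Equiv.ext fun y => ?_
  show g + g' + y = g + (g' + y)
  rw [add_assoc]

variable (n : ℕ) (e : (ZMod p × ZMod p) ≃ Fin n)

def alphaB : Multiplicative (ZMod p × ZMod p) →* Equiv.Perm (Fin n) :=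
  MonoidHom.mk' (fun g => permCongrHom e (apermB p (Multiplicative.toAdd g)))
    (by
      intro g g'
      show permCongrHom e (apermB p (Multiplicative.toAdd g + Multiplicative.toAdd g')) = _
      rw [apermB_add, map_mul])

theorem alphaB_apply (g : Multiplicative (ZMod p × ZMod p)) (y : ZMod p × ZMod p) :
    alphaB p n e g (e y) = e (apermB p (Multiplicative.toAdd g) y) :=
  permCongrHom_apply e _ y

end CaseB

theorem caseB (n p : ℕ) (hp : p.Prime) (hn : n = p * p) :
    ∃ H : Subgroup (Equiv.Perm (Fin n)),
      Nonempty (H ≃* Multiplicative (ZMod p × ZMod p)) ∧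
      Nonempty (Sha1 H (rootLat n) ≃+ ZMod p) := by
  classical
  haveI : Fact p.Prime := ⟨hp⟩
  haveI : NeZero p := ⟨hp.pos.ne'⟩
  have hcard : Fintype.card (ZMod p × ZMod p) = n := by
    rw [Fintype.card_prod, ZMod.card, hn]
  obtain e : (ZMod p × ZMod p) ≃ Fin n := Fintype.equivFinOfCardEq hcard
  set α := alphaB p n e with hα
  have happ : ∀ (g : Multiplicative (ZMod p × ZMod p)) (y : ZMod p × ZMod p),
      α g (e y) = e (Multiplicative.toAdd g + y) := fun g y => alphaB_apply p n e g y
  have hsymm : ∀ (g : Multiplicative (ZMod p × ZMod p)) (x : Fin n),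
      e.symm (α g x) = Multiplicative.toAdd g + e.symm x := by
    intro g x
    conv_lhs => rw [← e.apply_symm_apply x, happ g, e.symm_apply_apply]
  have hn0 : 0 < n := by rw [hn]; exact Nat.mul_pos hp.pos hp.pos
  have hinj : Function.Injective α := by
    refine (injective_iff_map_eq_one α).2 ?_
    intro g hg
    have h1 := Equiv.ext_iff.mp hg (e 0)
    rw [happ] at h1
    have h2 : Multiplicative.toAdd g + 0 = 0 := e.injective h1
    rw [add_zero] at h2
    have h3 := congrArg Multiplicative.ofAdd h2
    simpa using h3
  set H := α.range with hH
  refine ⟨H, ⟨(MonoidHom.ofInjective hinj).symm⟩, ?_⟩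
  have hsm : ∀ (σ : ↥H) (x : Fin n), σ • x = (σ : Equiv.Perm (Fin n)) x := fun _ _ => rfl
  -- p • g = 0 in (ZMod p)²
  have hps : ∀ g : ZMod p × ZMod p, p • g = 0 := by
    intro g
    have h1 : p • g.1 = 0 := by
      rw [nsmul_eq_mul, ZMod.natCast_self, zero_mul]
    have h2 : p • g.2 = 0 := by
      rw [nsmul_eq_mul, ZMod.natCast_self, zero_mul]
    exact Prod.ext h1 h2
  -- (i)
  have hIA : invAug ↥H (Fin n) = AddSubgroup.zmultiples ((p : ℤ) * p) := by
    apply le_antisymm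
    · rintro t ⟨v, hv, rfl⟩
      have hconst : ∀ y : ZMod p × ZMod p, v (e y) = v (e 0) := by
        intro y
        have := hv ⟨α (Multiplicative.ofAdd y), ⟨_, rfl⟩⟩ (e 0)
        rw [hsm, happ] at this
        simpa using this
      rw [AddSubgroup.mem_zmultiples_iff]
      refine ⟨v (e 0), ?_⟩
      have h1 : ∑ x : Fin n, v x = ∑ y : ZMod p × ZMod p, v (e y) := (Equiv.sum_comp e (fun x => v x)).symm
      rw [h1, Finset.sum_congr rfl (fun y _ => hconst y), Finset.sum_const]
      rw [Finset.card_univ, Fintype.card_prod, ZMod.card]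
      push_cast
      rw [smul_eq_mul]
      ring
    · intro t ht
      rw [AddSubgroup.mem_zmultiples_iff] at ht
      obtain ⟨k, hk⟩ := ht
      rw [← hk]
      refine AddSubgroup.zsmul_mem _ ?_ k
      refine ⟨fun _ => 1, fun _ _ => rfl, ?_⟩
      rw [Finset.sum_const, Finset.card_univ, Fintype.card_fin, hn, nsmul_eq_mul]
      push_cast
      ring
  -- (ii)
  have hii : ∀ (σ : ↥H) (k : ℤ), (p : ℤ) * k ∈ invAug ↥(Subgroup.zpowers σ) (Fin n) := by
    intro σ k
    obtain ⟨g, hg⟩ := σ.2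
    rw [mem_invAug_zpowers_iff]
    rcases eq_or_ne (Multiplicative.toAdd g) 0 with h0 | h0
    · -- σ = 1
      have hone : (σ : Equiv.Perm (Fin n)) = 1 := by
        rw [← hg]
        have : g = 1 := by
          have := congrArg Multiplicative.ofAdd h0
          simpa using this
        rw [this, map_one]
      refine ⟨Pi.single (e 0) ((p : ℤ) * k), ?_, by rw [sum_single]⟩
      intro x
      rw [hsm, hone]
      rfl
    · -- indicator of the coset subgroup
      have hcardS : Fintype.card ↥(AddSubgroup.zmultiples (Multiplicative.toAdd g)) = p := by
        rw [Fintype.card_zmultiples]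
        exact addOrderOf_eq_prime (hps _) h0
      refine ⟨fun x => if e.symm x ∈ AddSubgroup.zmultiples (Multiplicative.toAdd g) then k else 0, ?_, ?_⟩
      · intro x
        rw [hsm, ← hg]
        show (if e.symm ((α g) x) ∈ AddSubgroup.zmultiples (Multiplicative.toAdd g) then k else 0)
            = if e.symm x ∈ AddSubgroup.zmultiples (Multiplicative.toAdd g) then k else 0
        rw [hsymm]
        congr 1
        simp only [eq_iff_iff]
        exact AddSubgroup.add_mem_cancel_left _ (AddSubgroup.mem_zmultiples _)
      · have h1 := Equiv.sum_comp e
          (fun x => if e.symm x ∈ AddSubgroup.zmultiples (Multiplicative.toAdd g) then k else 0)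
        rw [← h1]
        simp only [Equiv.symm_apply_apply]
        rw [Finset.sum_ite, Finset.sum_const, Finset.sum_const_zero, add_zero]
        have h2 : (Finset.univ.filter
            (fun y : ZMod p × ZMod p => y ∈ AddSubgroup.zmultiples (Multiplicative.toAdd g))).card = p := by
          rw [← Fintype.card_subtype, hcardS]
        rw [h2, nsmul_eq_mul]
  -- (iii)
  have hiii : ∀ t : ℤ, (∀ σ : ↥H, t ∈ invAug ↥(Subgroup.zpowers σ) (Fin n)) → (p:ℤ) ∣ t := by
    intro t ht
    have h := ht ⟨α (Multiplicative.ofAdd ((1 : ZMod p), (0 : ZMod p))), ⟨_, rfl⟩⟩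
    rw [mem_invAug_zpowers_iff] at h
    obtain ⟨v, hv, hsum⟩ := h
    have hstep : ∀ y : ZMod p × ZMod p, v (e (((1 : ZMod p), (0 : ZMod p)) + y)) = v (e y) := by
      intro y
      have h2 := hv (e y)
      rw [hsm, happ] at h2
      simpa using h2
    have hnat : ∀ (s : ℕ) (y : ZMod p × ZMod p),
        v (e ((((s : ℕ) : ZMod p), (0 : ZMod p)) + y)) = v (e y) := by
      intro s
      induction s with
      | zero => intro y; simp only [Nat.cast_zero]; rw [show ((0 : ZMod p), (0 : ZMod p)) = 0 from rfl, zero_add]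
      | succ s ih =>
        intro y
        have hsplit : ((((s+1 : ℕ) : ZMod p), (0 : ZMod p)) : ZMod p × ZMod p)
            = ((1 : ZMod p), (0:ZMod p)) + ((((s : ℕ) : ZMod p)), (0:ZMod p)) := by
          apply Prod.ext
          · show ((s+1 : ℕ) : ZMod p) = 1 + ((s : ℕ) : ZMod p)
            push_cast; ring
          · show (0 : ZMod p) = 0 + 0
            rw [add_zero]
        rw [hsplit, add_assoc, hstep, ih]
    have hfib : ∀ y : ZMod p × ZMod p, v (e y) = v (e (0, y.2)) := by
      intro y
      have h3 := hnat (ZMod.val y.1) ((0 : ZMod p), y.2)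
      rw [ZMod.natCast_val, ZMod.cast_id] at h3
      simpa using h3
    refine ⟨∑ u : ZMod p, v (e (0, u)), ?_⟩
    have h1 : ∑ x : Fin n, v x = ∑ y : ZMod p × ZMod p, v (e y) := (Equiv.sum_comp e (fun x => v x)).symm
    rw [← hsum, h1, Fintype.sum_prod_type]
    have h2 : ∀ s : ZMod p, ∑ u : ZMod p, v (e (s, u)) = ∑ u : ZMod p, v (e (0, u)) :=
      fun s => Finset.sum_congr rfl (fun u _ => hfib (s, u))
    rw [Finset.sum_congr rfl (fun s _ => h2 s), Finset.sum_const, Finset.card_univ, ZMod.card,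
      nsmul_eq_mul]
  exact master n p hn0 H p (by exact_mod_cast hp.pos.ne') hIA hii hiii

end ShaAux
end Hidden6
theorem stmt_16 (n p : ℕ) (h2 : 2 ≤ n) (hnp : ¬ n.Prime) (hp : p = n.minFac) :
    ∃ H : Subgroup (Equiv.Perm (Fin n)),
      Nonempty (H ≃* Multiplicative (ZMod p × ZMod p)) ∧
      Nonempty (Sha1 H (rootLat n) ≃+ ZMod p) := by
  subst hp
  have hn1 : n ≠ 1 := by omega
  have hp' : (n.minFac).Prime := Nat.minFac_prime hn1
  have hdvd : n.minFac ∣ n := Nat.minFac_dvd n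
  have hnm : n = n.minFac * (n / n.minFac) := (Nat.mul_div_cancel' hdvd).symm
  have hm0 : 0 < n / n.minFac := by
    rcases Nat.eq_zero_or_pos (n / n.minFac) with h | h
    · rw [h, mul_zero] at hnm; omega
    · exact h
  have hm1 : n / n.minFac ≠ 1 := by
    intro h
    rw [h, mul_one] at hnm
    exact hnp (hnm ▸ hp')
  have hmm : n.minFac ≤ n / n.minFac := by
    have h1 : (n / n.minFac) ∣ n := Nat.div_dvd_of_dvd hdvd
    have h3 : n.minFac ≤ (n / n.minFac).minFac :=
      Nat.minFac_le_of_dvd (Nat.minFac_prime hm1).two_le (dvd_trans (Nat.minFac_dvd _) h1)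
    exact le_trans h3 (Nat.minFac_le hm0)
  rcases lt_or_eq_of_le hmm with hlt | heq
  · exact ShaAux.caseA n n.minFac (n / n.minFac) hp' hnm hlt
  · rw [← heq] at hnm
    exact ShaAux.caseB n n.minFac hp' hnm
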